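/- arXiv:2310.00735 — 2 statements merged into one kernel-verified Lean document; each statement's English description precedes it below -/
import Mathlib

section
/- Let q be a prime power and let θ be a multiplicative character of F_{q^2} with θ ≠ θ^q (i.e., θ^{q-1} is nontrivial). Let ψ be a nontrivial additive character of F_q and ψ₂ = ψ ∘ Tr_{F_{q^2}/F_q}. Then the Gauss sum G(θ^{q-1}, ψ₂) = Σ_{x ∈ F_{q^2}^×} θ^{q-1}(x) ψ₂(x) equals q·θ(-1). -/
open Finset Polynomial

-- sum over field = f 0 + sum over units
lemma aux_sum_units {K : Type*} [Field K] [Fintype K] [DecidableEq K] {β : Type*}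
    [AddCommMonoid β] (f : K → β) : ∑ x : K, f x = f 0 + ∑ u : Kˣ, f u := by
  rw [← Finset.add_sum_erase _ f (Finset.mem_univ 0)]
  congr 1
  have h : Finset.univ.erase (0 : K) = Finset.univ.image (fun u : Kˣ => (u : K)) := by
    ext x
    simp only [Finset.mem_erase, Finset.mem_univ, and_true, Finset.mem_image, true_and]
    constructor
    · intro hx; exact ⟨Units.mk0 x hx, rfl⟩
    · rintro ⟨u, rfl⟩; exact u.ne_zero
  rw [h, Finset.sum_image (fun a _ b _ hab => Units.ext hab)]

lemma aux_trace_formula (F E : Type*) [Field F] [Fintype F] [Field E] [Fintype E]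
    [Algebra F E] (h2 : Module.finrank F E = 2) (x : E) :
    algebraMap F E (Algebra.trace F E x) = x + x ^ (Fintype.card F) := by
  classical
  have hq1 : 1 < Fintype.card F := Fintype.one_lt_card
  obtain ⟨p, hp⟩ := CharP.exists F
  haveI := hp
  haveI hpp : Fact p.Prime := ⟨CharP.char_is_prime F p⟩
  haveI : CharP E p := charP_of_injective_algebraMap (algebraMap F E).injective p
  haveI : ExpChar E p := ExpChar.prime hpp.out
  obtain ⟨n, -, hcard⟩ := FiniteField.card F p
  -- the Frobenius algebra hom
  let f : E →ₐ[F] E :=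
    { iterateFrobenius E p n with
      commutes' := fun c => by
        show (algebraMap F E c) ^ p ^ (n : ℕ) = algebraMap F E c
        rw [← map_pow, ← hcard, FiniteField.pow_card] }
  have hf : ∀ y : E, f y = y ^ Fintype.card F := fun y => by
    show y ^ p ^ (n : ℕ) = _
    rw [hcard]
  have hbij : Function.Bijective f :=
    (Finite.injective_iff_bijective).mp (f.toRingHom.injective)
  let σ : E ≃ₐ[F] E := AlgEquiv.ofBijective f hbij
  have hσ : ∀ y : E, σ y = y ^ Fintype.card F := hf
  -- σ ≠ 1
  have hex : ∃ y : E, y ^ Fintype.card F ≠ y := by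
    by_contra hcon
    push_neg at hcon
    set P : E[X] := X ^ Fintype.card F - X with hP
    have hPne : P ≠ 0 := FiniteField.X_pow_card_sub_X_ne_zero E hq1
    have hsub : (Finset.univ : Finset E) ⊆ P.roots.toFinset := by
      intro y _
      rw [Multiset.mem_toFinset, mem_roots hPne]
      simp [hP, IsRoot, hcon y]
    have hle : Fintype.card E ≤ Fintype.card F := by
      calc Fintype.card E = (Finset.univ : Finset E).card := rfl
        _ ≤ P.roots.toFinset.card := Finset.card_le_card hsub
        _ ≤ Multiset.card P.roots := Multiset.toFinset_card_le _
        _ ≤ P.natDegree := P.card_roots'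
        _ = Fintype.card F := FiniteField.X_pow_card_sub_X_natDegree_eq E hq1
    have hcardE : Fintype.card E = Fintype.card F ^ 2 := by
      rw [Module.card_eq_pow_finrank (K := F) (V := E), h2]
    rw [hcardE, pow_two] at hle
    nlinarith
  have hσne : (1 : E ≃ₐ[F] E) ≠ σ := by
    obtain ⟨y, hy⟩ := hex
    intro h
    apply hy
    rw [← hσ y, ← h, AlgEquiv.one_apply]
  -- the automorphism group is {1, σ}
  have hcard2 : Fintype.card (E ≃ₐ[F] E) = 2 := by
    rw [← Nat.card_eq_fintype_card, IsGalois.card_aut_eq_finrank, h2]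
  have huniv : (Finset.univ : Finset (E ≃ₐ[F] E)) = {1, σ} := by
    symm
    apply Finset.eq_of_subset_of_card_le (Finset.subset_univ _)
    rw [Finset.card_univ, hcard2, Finset.card_insert_of_notMem (by simpa using hσne),
      Finset.card_singleton]
  rw [trace_eq_sum_automorphisms, huniv, Finset.sum_pair hσne, AlgEquiv.one_apply, hσ]

lemma aux_two_ne_zero (F : Type*) [Field F] [Fintype F] (hodd : Odd (Fintype.card F)) :
    (2 : F) ≠ 0 := by
  intro h
  haveI := ringChar.charP F
  haveI : Fact (ringChar F).Prime := ⟨CharP.char_is_prime F _⟩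
  have hdvd : ringChar F ∣ 2 := (CharP.cast_eq_zero_iff F (ringChar F) 2).mp (by exact_mod_cast h)
  have h2 : ringChar F = 2 := (Nat.prime_dvd_prime_iff_eq (Fact.out) Nat.prime_two).mp hdvd
  obtain ⟨n, -, hcard⟩ := FiniteField.card F (ringChar F)
  rw [hcard, h2] at hodd
  exact Nat.not_odd_iff_even.mpr (Nat.even_pow.mpr ⟨even_iff_two_dvd.mpr dvd_rfl, n.ne_zero⟩) hodd

/-- Gauss sum of `θ^{q-1}` over `F_{q^2}` against `ψ ∘ Tr` equals `q·θ(-1)`. -/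
theorem stmt_0 (F E : Type*) [Field F] [Fintype F] [Field E] [Fintype E] [DecidableEq E]
    [Algebra F E] (h2 : Module.finrank F E = 2)
    (hodd : Odd (Fintype.card F))
    (θ : MulChar E ℂ)
    (hθ : ∃ x : Eˣ, θ (x : E) ^ (Fintype.card F - 1) ≠ 1)
    (ψ : AddChar F ℂ) (hψ : ψ ≠ 1) :
    ∑ x : Eˣ, θ (x : E) ^ (Fintype.card F - 1) * ψ (Algebra.trace F E (x : E))
      = (Fintype.card F : ℂ) * θ (-1) := by
  classical
  have hq1 : 1 < Fintype.card F := Fintype.one_lt_card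
  set q := Fintype.card F with hqdef
  have htr := aux_trace_formula F E h2
  have h2F : (2 : F) ≠ 0 := aux_two_ne_zero F hodd
  have hinj := (algebraMap F E).injective
  -- invariance of χ = θ^{q-1} under multiplication by scalars
  have hχinv : ∀ (c : Fˣ) (y : E),
      θ (algebraMap F E (c : F) * y) ^ (q - 1) = θ y ^ (q - 1) := by
    intro c y
    have hc : ((c : F)) ^ (q - 1) = 1 :=
      FiniteField.pow_card_sub_one_eq_one _ c.ne_zero
    rw [map_mul, mul_pow, ← map_pow, ← map_pow, hc, map_one, map_one, one_mul]
  -- trace of scaled element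
  have htrs : ∀ (c : F) (y : E), Algebra.trace F E (algebraMap F E c * y)
      = c * Algebra.trace F E y := by
    intro c y
    rw [← Algebra.smul_def, map_smul, smul_eq_mul]
  -- a nonzero trace-zero element
  have hT1 : Algebra.trace F E (1 : E) ≠ 0 := by
    have h1 : Algebra.trace F E (1 : E) = (2 : F) := by
      have := Algebra.trace_algebraMap (S := E) (1 : F)
      rw [map_one] at this
      rw [this, h2]
      push_cast [nsmul_eq_mul]
      ring
    rw [h1]; exact h2F
  have hrange : LinearMap.range (Algebra.trace F E) = ⊤ := by
    rw [LinearMap.range_eq_top]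
    intro y
    refine ⟨(y * (Algebra.trace F E 1)⁻¹) • 1, ?_⟩
    rw [map_smul, smul_eq_mul, mul_assoc, inv_mul_cancel₀ hT1, mul_one]
  have hker : Module.finrank F (LinearMap.ker (Algebra.trace F E)) = 1 := by
    have hrn := LinearMap.finrank_range_add_finrank_ker (Algebra.trace F E)
    rw [hrange, finrank_top, Module.finrank_self, h2] at hrn
    omega
  have hkerne : LinearMap.ker (Algebra.trace F E) ≠ ⊥ := by
    intro h; rw [h, finrank_bot] at hker; exact one_ne_zero hker.symm
  obtain ⟨x₀, hx₀mem, hx₀ne⟩ := Submodule.exists_mem_ne_zero_of_ne_bot hkerne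
  have hx₀tr : Algebra.trace F E x₀ = 0 := LinearMap.mem_ker.mp hx₀mem
  have hspan : LinearMap.ker (Algebra.trace F E) = Submodule.span F {x₀} := by
    symm
    apply Submodule.eq_of_le_of_finrank_le
      ((Submodule.span_le).mpr (by simpa using hx₀mem))
    rw [hker, finrank_span_singleton hx₀ne]
  have hx₀pow : x₀ ^ (q - 1) = -1 := by
    have h0 := htr x₀
    rw [hx₀tr, map_zero] at h0
    have hq' : x₀ ^ q = -x₀ := by linear_combination -h0
    have hmul : x₀ * x₀ ^ (q - 1) = x₀ * (-1) := by
      rw [mul_neg_one, ← hq', ← pow_succ', Nat.sub_add_cancel hq1.le]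
    exact mul_left_cancel₀ hx₀ne hmul
  have hθx₀ : θ x₀ ^ (q - 1) = θ (-1) := by rw [← map_pow, hx₀pow]
  -- sum of χ over units is zero
  have hsum0 : ∑ x : Eˣ, θ (x : E) ^ (q - 1) = 0 := by
    have hne : (θ ^ (q - 1)) ≠ 1 := by
      rw [MulChar.ne_one_iff]
      obtain ⟨x, hx⟩ := hθ
      exact ⟨x, by rw [MulChar.pow_apply_coe]; exact hx⟩
    have h0 := MulChar.sum_eq_zero_of_ne_one hne
    rw [aux_sum_units (fun a : E => (θ ^ (q - 1)) a)] at h0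
    simp only [MulChar.map_zero, zero_add] at h0
    rw [← h0]
    exact Finset.sum_congr rfl fun x _ => (MulChar.pow_apply_coe θ (q - 1) x).symm
  -- the units map Fˣ → Eˣ
  let u : Fˣ →* Eˣ := Units.map (algebraMap F E : F →+* E).toMonoidHom
  have hu : ∀ c : Fˣ, ((u c : Eˣ) : E) = algebraMap F E (c : F) := fun c => rfl
  -- step 1 : scaling invariance of the Gauss sum
  have hstep1 : ∀ c : Fˣ,
      ∑ x : Eˣ, θ (x : E) ^ (q - 1) * ψ (Algebra.trace F E (x : E))
      = ∑ x : Eˣ, θ (x : E) ^ (q - 1) * ψ ((c : F) * Algebra.trace F E (x : E)) := by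
    intro c
    refine (Fintype.sum_bijective (fun x : Eˣ => u c * x)
      (Group.mulLeft_bijective (u c))
      (fun x : Eˣ => θ (x : E) ^ (q - 1) * ψ ((c : F) * Algebra.trace F E (x : E)))
      (fun x : Eˣ => θ (x : E) ^ (q - 1) * ψ (Algebra.trace F E (x : E))) ?_).symm
    intro x
    show θ ((x : E)) ^ (q - 1) * ψ ((c : F) * Algebra.trace F E (x : E))
      = θ (((u c * x : Eˣ)) : E) ^ (q - 1) * ψ (Algebra.trace F E ((u c * x : Eˣ) : E))
    have hcx : ((u c * x : Eˣ) : E) = algebraMap F E (c : F) * (x : E) := rfl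
    rw [hcx, hχinv, htrs]
  -- inner additive character sum
  have hinner : ∀ t : F, ∑ c : Fˣ, ψ ((c : F) * t)
      = (if t = 0 then (q : ℂ) else 0) - 1 := by
    intro t
    have h := AddChar.sum_mulShift t (AddChar.IsPrimitive.of_ne_one hψ)
    rw [aux_sum_units (fun x : F => ψ (x * t))] at h
    rw [zero_mul, AddChar.map_zero_eq_one] at h
    push_cast at h
    rw [← hqdef] at h
    exact eq_sub_of_add_eq' h
  -- trace-zero sum
  have hT' : ∑ x : Eˣ, (if Algebra.trace F E (x : E) = 0 then θ (x : E) ^ (q - 1) else 0)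
      = ((q : ℂ) - 1) * θ (-1) := by
    rw [← Finset.sum_filter]
    have u₀ : Eˣ := Units.mk0 x₀ hx₀ne
    have himg : Finset.univ.filter (fun x : Eˣ => Algebra.trace F E (x : E) = 0)
        = Finset.univ.image (fun c : Fˣ => u c * Units.mk0 x₀ hx₀ne) := by
      ext x
      simp only [Finset.mem_filter, Finset.mem_univ, true_and, Finset.mem_image]
      constructor
      · intro hx
        have hmem : (x : E) ∈ LinearMap.ker (Algebra.trace F E) := LinearMap.mem_ker.mpr hx
        rw [hspan, Submodule.mem_span_singleton] at hmem
        obtain ⟨a, ha⟩ := hmem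
        have hane : a ≠ 0 := by
          rintro rfl
          rw [zero_smul] at ha
          exact x.ne_zero ha.symm
        refine ⟨Units.mk0 a hane, Units.ext ?_⟩
        show algebraMap F E a * x₀ = (x : E)
        rw [← Algebra.smul_def, ha]
      · rintro ⟨c, rfl⟩
        show Algebra.trace F E (algebraMap F E (c : F) * x₀) = 0
        rw [htrs, hx₀tr, mul_zero]
    rw [himg, Finset.sum_image (fun a _ b _ hab => by
      have h1 : algebraMap F E (a : F) * x₀ = algebraMap F E (b : F) * x₀ :=
        congrArg (Units.val) hab
      exact Units.ext (hinj (mul_right_cancel₀ hx₀ne h1)))]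
    have : ∀ c : Fˣ, θ (((u c * Units.mk0 x₀ hx₀ne : Eˣ)) : E) ^ (q - 1) = θ (-1) := by
      intro c
      show θ (algebraMap F E (c : F) * x₀) ^ (q - 1) = _
      rw [hχinv, hθx₀]
    rw [Finset.sum_congr rfl fun c _ => this c, Finset.sum_const, Finset.card_univ,
      Fintype.card_units, nsmul_eq_mul, Nat.cast_sub hq1.le, Nat.cast_one]
  -- put everything together
  have hqne : ((q : ℂ) - 1) ≠ 0 := by
    have : (q : ℂ) ≠ 1 := by exact_mod_cast hq1.ne'
    exact sub_ne_zero.mpr this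
  apply mul_left_cancel₀ hqne
  calc ((q : ℂ) - 1) * ∑ x : Eˣ, θ (x : E) ^ (q - 1) * ψ (Algebra.trace F E (x : E))
      = ∑ _c : Fˣ, ∑ x : Eˣ, θ (x : E) ^ (q - 1) * ψ (Algebra.trace F E (x : E)) := by
        rw [Finset.sum_const, Finset.card_univ, Fintype.card_units, nsmul_eq_mul,
          Nat.cast_sub hq1.le, Nat.cast_one]
    _ = ∑ c : Fˣ, ∑ x : Eˣ, θ (x : E) ^ (q - 1) * ψ ((c : F) * Algebra.trace F E (x : E)) :=
        Finset.sum_congr rfl fun c _ => hstep1 c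
    _ = ∑ x : Eˣ, ∑ c : Fˣ, θ (x : E) ^ (q - 1) * ψ ((c : F) * Algebra.trace F E (x : E)) :=
        Finset.sum_comm
    _ = ∑ x : Eˣ, θ (x : E) ^ (q - 1) *
          ((if Algebra.trace F E (x : E) = 0 then (q : ℂ) else 0) - 1) := by
        refine Finset.sum_congr rfl fun x _ => ?_
        rw [← Finset.mul_sum, hinner]
    _ = (q : ℂ) * ∑ x : Eˣ, (if Algebra.trace F E (x : E) = 0 then θ (x : E) ^ (q - 1) else 0)
        - ∑ x : Eˣ, θ (x : E) ^ (q - 1) := by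
        rw [Finset.mul_sum, ← Finset.sum_sub_distrib]
        refine Finset.sum_congr rfl fun x _ => ?_
        split_ifs <;> ring
    _ = ((q : ℂ) - 1) * ((q : ℂ) * θ (-1)) := by
        rw [hsum0, sub_zero, hT']
        ring
end

section
/- Let q be an odd prime power, ψ a nontrivial additive character of F_q, and η a multiplicative character of F_{q^2} that is trivial on F_q^× but nontrivial on F_{q^2}^×. Then Σ_{x ∈ F_{q^2}^×} η(x) ψ(Tr_{F_{q^2}/F_q}(x)) = q · Σ_{x ∈ F_{q^2}^×, Tr(x)=0} η(x) / (q-1), i.e., the Gauss sum equals q·η(x₀) where x₀ is any element of trace zero. -/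
/-- If `η` is trivial on `F_q^×` but nontrivial on `F_{q^2}^×`, the Gauss sum
`Σ η(x) ψ(Tr x)` equals `q · η(x₀)` for any trace-zero `x₀ ≠ 0`. -/
theorem stmt_4 (F E : Type*) [Field F] [Fintype F] [Field E] [Fintype E] [DecidableEq E]
    [Algebra F E] (h2 : Module.finrank F E = 2)
    (hodd : Odd (Fintype.card F))
    (ψ : AddChar F ℂ) (hψ : ψ ≠ 1)
    (η : MulChar E ℂ)
    (htriv : ∀ a : F, a ≠ 0 → η (algebraMap F E a) = 1)
    (hnontriv : ∃ x : Eˣ, η (x : E) ≠ 1)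
    (x₀ : E) (hx₀ : x₀ ≠ 0) (ht : Algebra.trace F E x₀ = 0) :
    ∑ x : Eˣ, η (x : E) * ψ (Algebra.trace F E (x : E))
      = (Fintype.card F : ℂ) * η x₀ := by
  classical
  have : Module.Finite F E := Module.Finite.of_finite
  set q := Fintype.card F with hq
  set tr : E →ₗ[F] F := Algebra.trace F E with htr
  have hη : η ≠ 1 := by
    rintro rfl
    obtain ⟨x, hx⟩ := hnontriv
    exact hx (by simp)
  set f : E → ℂ := fun x => η x * ψ (tr x) with hf
  set S : ℂ := ∑ x : E, f x with hS
  -- sum over units equals sum over E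
  have hA : ∑ x : Eˣ, η (x : E) * ψ (Algebra.trace F E (x : E)) = S := by
    let φ : Eˣ ↪ E := ⟨fun x => x, fun _ _ => Units.ext⟩
    have hmap : Finset.univ.map φ = Finset.univ \ {0} := by
      ext x
      simpa only [Finset.mem_map, Finset.mem_univ, Function.Embedding.coeFn_mk, true_and,
        Finset.mem_sdiff, Finset.mem_singleton, φ] using (show (∃ a : Eˣ, φ a = x) ↔ x ≠ 0 from isUnit_iff_ne_zero)
    have h0 : f 0 = 0 := by
      simp [hf, η.map_nonunit not_isUnit_zero]
    calc ∑ x : Eˣ, η (x : E) * ψ (Algebra.trace F E (x : E))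
        = ∑ x ∈ Finset.univ.map φ, f x := by rw [Finset.sum_map]; rfl
      _ = ∑ x ∈ Finset.univ \ {0}, f x := by rw [hmap]
      _ = S := by
          rw [hS, ← Finset.sum_sdiff (Finset.subset_univ {0}), Finset.sum_singleton, h0, add_zero]
  rw [hA]
  -- scaling invariance
  have hB : ∀ a : F, a ≠ 0 → S = ∑ x : E, η x * ψ (a * tr x) := by
    intro a ha
    have hu : algebraMap F E a ≠ 0 := by
      simpa using (map_ne_zero (algebraMap F E)).mpr ha
    symm
    refine Fintype.sum_bijective (fun x => algebraMap F E a * x)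
      (mulLeft_bijective₀ _ hu) _ _ ?_
    intro x
    have h1 : η (algebraMap F E a * x) = η x := by
      rw [map_mul, htriv a ha, one_mul]
    have h2' : tr (algebraMap F E a * x) = a * tr x := by
      rw [← Algebra.smul_def, map_smul, smul_eq_mul]
    simp [hf, h1, h2']
  -- primitivity of ψ
  have hprim : AddChar.IsPrimitive ψ := AddChar.IsPrimitive.of_ne_one hψ
  -- sum over nonzero a
  have hC : ((q : ℂ) - 1) * S
      = ∑ a ∈ Finset.univ \ {(0 : F)}, ∑ x : E, η x * ψ (a * tr x) := by
    have key : ∀ a ∈ Finset.univ \ {(0 : F)}, (∑ x : E, η x * ψ (a * tr x)) = S := by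
      intro a ha
      rw [Finset.mem_sdiff, Finset.mem_singleton] at ha
      exact (hB a ha.2).symm
    rw [Finset.sum_congr rfl key, Finset.sum_const,
      Finset.card_sdiff_of_subset (Finset.subset_univ _), Finset.card_singleton,
      Finset.card_univ, nsmul_eq_mul, Nat.cast_sub Fintype.card_pos, Nat.cast_one]
  -- swap and evaluate inner character sums
  have hsum : ∀ x : E, ∑ a ∈ Finset.univ \ {(0 : F)}, ψ (a * tr x)
      = (if tr x = 0 then (q : ℂ) else 0) - 1 := by
    intro x
    have h1 : ∑ a : F, ψ (a * tr x) = if tr x = 0 then (q : ℂ) else 0 := by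
      simpa using AddChar.sum_mulShift (tr x) hprim
    have h2' : ∑ a ∈ Finset.univ \ {(0 : F)}, ψ (a * tr x)
        = (∑ a : F, ψ (a * tr x)) - ψ (0 * tr x) := by
      rw [← Finset.sum_sdiff (Finset.subset_univ {(0 : F)}), Finset.sum_singleton]
      ring
    rw [h2', h1, zero_mul, AddChar.map_zero_eq_one]
  have hC2 : ((q : ℂ) - 1) * S
      = (q : ℂ) * ∑ x ∈ Finset.univ.filter (fun x => tr x = 0), η x := by
    rw [hC, Finset.sum_comm]
    have : ∀ x : E, ∑ a ∈ Finset.univ \ {(0 : F)}, η x * ψ (a * tr x)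
        = η x * ((if tr x = 0 then (q : ℂ) else 0) - 1) := by
      intro x
      rw [← Finset.mul_sum, hsum x]
    rw [Finset.sum_congr rfl fun x _ => this x]
    have hzero : ∑ x : E, η x = 0 := MulChar.sum_eq_zero_of_ne_one hη
    calc ∑ x : E, η x * ((if tr x = 0 then (q : ℂ) else 0) - 1)
        = (∑ x : E, η x * (if tr x = 0 then (q : ℂ) else 0)) - ∑ x : E, η x := by
          rw [← Finset.sum_sub_distrib]; apply Finset.sum_congr rfl; intros; ring
      _ = ∑ x : E, η x * (if tr x = 0 then (q : ℂ) else 0) := by rw [hzero, sub_zero]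
      _ = ∑ x ∈ Finset.univ.filter (fun x => tr x = 0), η x * (q : ℂ) := by
          rw [Finset.sum_filter]; apply Finset.sum_congr rfl; intro x _
          by_cases h : tr x = 0 <;> simp [h]
      _ = (q : ℂ) * ∑ x ∈ Finset.univ.filter (fun x => tr x = 0), η x := by
          rw [Finset.mul_sum]; apply Finset.sum_congr rfl; intros; ring
  -- the kernel of the trace is the span of x₀
  have hker : LinearMap.ker tr = Submodule.span F {x₀} := by
    have hle : Submodule.span F {x₀} ≤ LinearMap.ker tr := by
      rw [Submodule.span_le, Set.singleton_subset_iff]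
      exact ht
    have hrange : LinearMap.range tr = ⊤ :=
      LinearMap.range_eq_top.mpr (Algebra.trace_surjective F E)
    have hrk : Module.finrank F (LinearMap.range tr) + Module.finrank F (LinearMap.ker tr)
        = Module.finrank F E := LinearMap.finrank_range_add_finrank_ker tr
    have hr1 : Module.finrank F (LinearMap.range tr) = 1 := by
      rw [hrange, finrank_top, Module.finrank_self]
    have hk1 : Module.finrank F (LinearMap.ker tr) = 1 := by omega
    exact (Submodule.eq_of_le_of_finrank_eq hle
      (by rw [hk1, finrank_span_singleton hx₀])).symm
  -- compute the trace-zero character sum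
  have hT : ∑ x ∈ Finset.univ.filter (fun x => tr x = 0), η x = ((q : ℂ) - 1) * η x₀ := by
    have hbij : ∑ x ∈ Finset.univ.filter (fun x => tr x = 0), η x = ∑ a : F, η (a • x₀) := by
      symm
      refine Finset.sum_nbij (fun a => a • x₀) ?_ ?_ ?_ ?_
      · intro a _
        simp only [Finset.mem_filter, Finset.mem_univ, true_and]
        rw [map_smul, ht, smul_zero]
      · intro a _ b _ hab
        exact smul_left_injective F hx₀ hab
      · intro x hx
        simp only [Finset.coe_filter, Set.mem_setOf_eq] at hx
        have : x ∈ Submodule.span F {x₀} := by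
          rw [← hker]; exact hx.2
        obtain ⟨a, ha⟩ := Submodule.mem_span_singleton.mp this
        exact ⟨a, by simp, ha⟩
      · intros; rfl
    rw [hbij]
    calc ∑ a : F, η (a • x₀)
        = ∑ a ∈ Finset.univ \ {(0 : F)}, η (a • x₀) + η ((0 : F) • x₀) := by
          rw [← Finset.sum_sdiff (Finset.subset_univ {(0 : F)}), Finset.sum_singleton]
      _ = ∑ a ∈ Finset.univ \ {(0 : F)}, η (a • x₀) := by
          rw [zero_smul, η.map_nonunit not_isUnit_zero, add_zero]
      _ = ∑ a ∈ Finset.univ \ {(0 : F)}, η x₀ := by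
          apply Finset.sum_congr rfl
          intro a ha
          rw [Finset.mem_sdiff, Finset.mem_singleton] at ha
          rw [Algebra.smul_def, map_mul, htriv a ha.2, one_mul]
      _ = ((q : ℂ) - 1) * η x₀ := by
          rw [Finset.sum_const, Finset.card_sdiff_of_subset (Finset.subset_univ _),
            Finset.card_singleton, Finset.card_univ, nsmul_eq_mul,
            Nat.cast_sub Fintype.card_pos, Nat.cast_one]
  -- conclude
  have hq1 : ((q : ℂ) - 1) ≠ 0 := by
    have : 1 < q := Fintype.one_lt_card
    intro h
    have : (q : ℂ) = 1 := by linear_combination h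
    exact_mod_cast (by omega : ¬ (q = 1)) (by exact_mod_cast this)
  have : ((q : ℂ) - 1) * S = ((q : ℂ) - 1) * ((q : ℂ) * η x₀) := by
    rw [hC2, hT]; ring
  exact mul_left_cancel₀ hq1 this
end
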